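/- arXiv:math/9811043 — 2 statements merged into one kernel-verified Lean document; each statement's English description precedes it below -/
import Mathlib

section
/- Let $L_1,\dots,L_6$ be six pairwise distinct lines in the projective plane over a field such that no point lies on more than three of the lines. Then there exist at least two distinct points each of which lies on exactly two of the six lines. -/
open scoped Classical

theorem stmt_3 {k : Type*} [Field k]
    (L : Fin 6 → Submodule k (Fin 3 → k))
    (hdim : ∀ i, Module.finrank k (L i) = 2)
    (hinj : Function.Injective L)
    (hmult : ∀ p : Submodule k (Fin 3 → k), Module.finrank k p = 1 →
      (Finset.univ.filter (fun i => p ≤ L i)).card ≤ 3) :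
    ∃ p q : Submodule k (Fin 3 → k), p ≠ q ∧
      Module.finrank k p = 1 ∧ Module.finrank k q = 1 ∧
      (Finset.univ.filter (fun i => p ≤ L i)).card = 2 ∧
      (Finset.univ.filter (fun i => q ≤ L i)).card = 2 := by
  classical
  have hV : Module.finrank k (Fin 3 → k) = 3 := by
    simp [Module.finrank_fin_fun]
  have hinf : ∀ i j, i ≠ j → Module.finrank k ↥(L i ⊓ L j) = 1 := by
    intro i j hij
    have hne : L i ≠ L j := fun h => hij (hinj h)
    have hlt : L i < L i ⊔ L j := by
      refine lt_of_le_of_ne le_sup_left ?_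
      intro h
      have hji : L j ≤ L i := h ▸ le_sup_right
      exact hne (Submodule.eq_of_le_of_finrank_eq hji (by rw [hdim, hdim])).symm
    have h3 : Module.finrank k ↥(L i ⊔ L j) = 3 := by
      have h1 : 2 < Module.finrank k ↥(L i ⊔ L j) := by
        rw [← hdim i]; exact Submodule.finrank_lt_finrank_of_lt hlt
      have h2 : Module.finrank k ↥(L i ⊔ L j) ≤ 3 := le_trans (Submodule.finrank_le _) (le_of_eq hV)
      omega
    have hsum := Submodule.finrank_sup_add_finrank_inf_eq (L i) (L j)
    rw [h3, hdim, hdim] at hsum; omega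
  have hpeq : ∀ (p : Submodule k (Fin 3 → k)) i j, i ≠ j →
      Module.finrank k p = 1 → p ≤ L i → p ≤ L j → p = L i ⊓ L j := by
    intro p i j hij hp hpi hpj
    exact Submodule.eq_of_le_of_finrank_eq (le_inf hpi hpj) (by rw [hp, hinf i j hij])
  have key : ∀ i, ∃ p : Submodule k (Fin 3 → k), Module.finrank k p = 1 ∧ p ≤ L i ∧
      (Finset.univ.filter (fun t => p ≤ L t)).card = 2 := by
    intro i
    by_contra hcon
    push_neg at hcon
    have hmult3 : ∀ j, j ≠ i →
        (Finset.univ.filter (fun t => (L i ⊓ L j) ≤ L t)).card = 3 := by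
      intro j hj
      have h1 := hinf i j (Ne.symm hj)
      have hle3 := hmult _ h1
      have hsub : ({i, j} : Finset (Fin 6)) ⊆
          Finset.univ.filter (fun t => (L i ⊓ L j) ≤ L t) := by
        intro t ht
        simp only [Finset.mem_insert, Finset.mem_singleton] at ht
        rcases ht with rfl | rfl
        · simp [inf_le_left]
        · simp [inf_le_right]
      have hge : 2 ≤ (Finset.univ.filter (fun t => (L i ⊓ L j) ≤ L t)).card := by
        have hcard : ({i, j} : Finset (Fin 6)).card = 2 := by
          rw [Finset.card_insert_of_notMem (by simpa using Ne.symm hj),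
            Finset.card_singleton]
        calc 2 = ({i, j} : Finset (Fin 6)).card := hcard.symm
          _ ≤ _ := Finset.card_le_card hsub
      have hne2 := hcon (L i ⊓ L j) h1 inf_le_left
      omega
    set S : Finset (Fin 6) := Finset.univ.filter (fun j => j ≠ i) with hS
    have hcardS : S.card = 5 := by
      rw [hS, Finset.filter_ne', Finset.card_erase_of_mem (Finset.mem_univ i)]
      simp
    have hfib : ∀ p ∈ S.image (fun j => L i ⊓ L j),
        (S.filter (fun t => L i ⊓ L t = p)).card = 2 := by
      intro p hp
      obtain ⟨j, hjS, rfl⟩ := Finset.mem_image.mp hp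
      have hjne : j ≠ i := by
        have := Finset.mem_filter.mp hjS; exact this.2
      have hset : S.filter (fun t => L i ⊓ L t = L i ⊓ L j) =
          (Finset.univ.filter (fun t => (L i ⊓ L j) ≤ L t)).erase i := by
        ext t
        simp only [hS, Finset.mem_filter, Finset.mem_erase, Finset.mem_univ,
          true_and]
        constructor
        · rintro ⟨hti, heq⟩
          exact ⟨hti, heq ▸ inf_le_right⟩
        · rintro ⟨hti, hle⟩
          refine ⟨hti, ?_⟩
          exact (hpeq (L i ⊓ L j) i t (Ne.symm hti) (hinf i j (Ne.symm hjne))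
            inf_le_left hle).symm
      rw [hset, Finset.card_erase_of_mem (by simp [inf_le_left]),
        hmult3 j hjne]
    have hsum := Finset.card_eq_sum_card_image (fun j => L i ⊓ L j) S
    rw [Finset.sum_congr rfl hfib, Finset.sum_const, smul_eq_mul] at hsum
    omega
  obtain ⟨p, hp1, hpL0, hp2⟩ := key 0
  have hex : ∃ i, ¬ p ≤ L i := by
    by_contra h
    push_neg at h
    have heq : (Finset.univ.filter (fun t => p ≤ L t)) = Finset.univ :=
      Finset.filter_true_of_mem (fun t _ => h t)
    rw [heq] at hp2
    simp at hp2
  obtain ⟨i, hi⟩ := hex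
  obtain ⟨q, hq1, hqLi, hq2⟩ := key i
  exact ⟨p, q, fun h => hi (h ▸ hqLi), hp1, hq1, hp2, hq2⟩
end

section
/- Let $L_1,\dots,L_6$ be six pairwise distinct lines in the projective plane over a field such that no point lies on more than three of the lines. Then there exist at least three distinct points each lying on exactly two of the six lines. -/
open scoped Classical

section Stmt4Aux

variable {k : Type*} [Field k]

lemma stmt4_finrank_inf (L : Fin 6 → Submodule k (Fin 3 → k))
    (hdim : ∀ i, Module.finrank k (L i) = 2) (hinj : Function.Injective L)
    {i j : Fin 6} (h : i ≠ j) : Module.finrank k ↥(L i ⊓ L j) = 1 := by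
  have h3 : Module.finrank k (Fin 3 → k) = 3 := by
    simp [Module.finrank_pi]
  have hsup : Module.finrank k ↥(L i ⊔ L j) ≤ 3 :=
    le_trans (Submodule.finrank_le _) (le_of_eq h3)
  have heq := Submodule.finrank_sup_add_finrank_inf_eq (L i) (L j)
  rw [hdim i, hdim j] at heq
  have h2 : Module.finrank k ↥(L i ⊓ L j) < 2 := by
    by_contra hcon
    push_neg at hcon
    have e1 : L i ⊓ L j = L i :=
      Submodule.eq_of_le_of_finrank_le inf_le_left (by rw [hdim i]; exact hcon)
    have e2 : L i ⊓ L j = L j :=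
      Submodule.eq_of_le_of_finrank_le inf_le_right (by rw [hdim j]; exact hcon)
    exact h (hinj (e1 ▸ e2))
  omega

lemma stmt4_point_eq_inf (L : Fin 6 → Submodule k (Fin 3 → k))
    (hdim : ∀ i, Module.finrank k (L i) = 2) (hinj : Function.Injective L)
    {p : Submodule k (Fin 3 → k)} (hp : Module.finrank k p = 1)
    {i j : Fin 6} (hij : i ≠ j) (hi : p ≤ L i) (hj : p ≤ L j) : p = L i ⊓ L j :=
  Submodule.eq_of_le_of_finrank_le (le_inf hi hj)
    (by rw [stmt4_finrank_inf L hdim hinj hij, hp])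

end Stmt4Aux

theorem stmt_4 {k : Type*} [Field k]
    (L : Fin 6 → Submodule k (Fin 3 → k))
    (hdim : ∀ i, Module.finrank k (L i) = 2)
    (hinj : Function.Injective L)
    (hmult : ∀ p : Submodule k (Fin 3 → k), Module.finrank k p = 1 →
      (Finset.univ.filter (fun i => p ≤ L i)).card ≤ 3) :
    ∃ p q r : Submodule k (Fin 3 → k), p ≠ q ∧ p ≠ r ∧ q ≠ r ∧
      Module.finrank k p = 1 ∧ Module.finrank k q = 1 ∧ Module.finrank k r = 1 ∧
      (Finset.univ.filter (fun i => p ≤ L i)).card = 2 ∧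
      (Finset.univ.filter (fun i => q ≤ L i)).card = 2 ∧
      (Finset.univ.filter (fun i => r ≤ L i)).card = 2 := by
  set T : Submodule k (Fin 3 → k) → Finset (Fin 6) :=
    fun p => Finset.univ.filter (fun i => p ≤ L i) with hT
  set f : Fin 6 × Fin 6 → Submodule k (Fin 3 → k) := fun ij => L ij.1 ⊓ L ij.2 with hf
  set Pairs : Finset (Fin 6 × Fin 6) := Finset.univ.filter (fun ij => ij.1 ≠ ij.2) with hPairs
  set S : Finset (Submodule k (Fin 3 → k)) := Pairs.image f with hSdef
  -- basic facts about members of S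
  have hSrank : ∀ p ∈ S, Module.finrank k ↥p = 1 := by
    intro p hp
    obtain ⟨ij, hij, rfl⟩ := Finset.mem_image.1 hp
    rw [hPairs, Finset.mem_filter] at hij
    exact stmt4_finrank_inf L hdim hinj hij.2
  have hSmem : ∀ p ∈ S, 2 ≤ (T p).card ∧ (T p).card ≤ 3 := by
    intro p hp
    have h1 := hSrank p hp
    refine ⟨?_, hmult p h1⟩
    obtain ⟨ij, hij, rfl⟩ := Finset.mem_image.1 hp
    rw [hPairs, Finset.mem_filter] at hij
    have hsub : ({ij.1, ij.2} : Finset (Fin 6)) ⊆ T (f ij) := by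
      intro x hx
      rw [hT, Finset.mem_filter]
      rcases Finset.mem_insert.1 hx with rfl | hx
      · exact ⟨Finset.mem_univ _, inf_le_left⟩
      · rw [Finset.mem_singleton] at hx
        subst hx
        exact ⟨Finset.mem_univ _, inf_le_right⟩
    calc 2 = ({ij.1, ij.2} : Finset (Fin 6)).card := by
              rw [Finset.card_insert_of_notMem (by simpa using hij.2), Finset.card_singleton]
      _ ≤ (T (f ij)).card := Finset.card_le_card hsub
  -- fibers of f over S
  have hfiber : ∀ p ∈ S, Pairs.filter (fun ij => f ij = p) = (T p).offDiag := by
    intro p hp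
    have h1 := hSrank p hp
    ext ⟨i, j⟩
    simp only [Finset.mem_filter, Finset.mem_offDiag, hPairs, hT, Finset.mem_univ, true_and,
      hf]
    constructor
    · rintro ⟨hij, rfl⟩
      exact ⟨inf_le_left, inf_le_right, hij⟩
    · rintro ⟨hi, hj, hij⟩
      exact ⟨hij, (stmt4_point_eq_inf L hdim hinj h1 hij hi hj).symm⟩
  -- double counting: 30 ordered pairs
  have hPairsCard : Pairs.card = 30 := by rw [hPairs]; decide
  have hcount : 30 = ∑ p ∈ S, ((T p).card * (T p).card - (T p).card) := by
    rw [← hPairsCard,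
      Finset.card_eq_sum_card_fiberwise (f := f) (t := S)
        (fun ij hij => Finset.mem_image_of_mem f hij)]
    refine Finset.sum_congr rfl fun p hp => ?_
    rw [hfiber p hp, Finset.offDiag_card]
  -- parity: there is a double point
  have hdouble : ∃ p ∈ S, (T p).card = 2 := by
    by_contra hcon
    push_neg at hcon
    have hall : ∀ p ∈ S, (T p).card = 3 := by
      intro p hp
      have := hSmem p hp
      have := hcon p hp
      omega
    set J : Finset (Fin 6) := Finset.univ.filter (fun j => (0 : Fin 6) ≠ j) with hJ
    set g : Fin 6 → Submodule k (Fin 3 → k) := fun j => L 0 ⊓ L j with hg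
    set S0 : Finset (Submodule k (Fin 3 → k)) := J.image g with hS0
    have hS0sub : S0 ⊆ S := by
      intro p hp
      obtain ⟨j, hj, rfl⟩ := Finset.mem_image.1 hp
      rw [hJ, Finset.mem_filter] at hj
      refine Finset.mem_image.2 ⟨(0, j), ?_, rfl⟩
      rw [hPairs, Finset.mem_filter]
      exact ⟨Finset.mem_univ _, hj.2⟩
    have hJcard : J.card = 5 := by rw [hJ]; decide
    have hfiber0 : ∀ p ∈ S0, J.filter (fun j => g j = p) = (T p).erase 0 := by
      intro p hp
      have h1 := hSrank p (hS0sub hp)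
      have hp0 : p ≤ L 0 := by
        obtain ⟨j, hj, rfl⟩ := Finset.mem_image.1 hp
        exact inf_le_left
      ext j
      simp only [Finset.mem_filter, Finset.mem_erase, hJ, hT, Finset.mem_univ, true_and, hg]
      constructor
      · rintro ⟨hj0, rfl⟩
        exact ⟨Ne.symm hj0, inf_le_right⟩
      · rintro ⟨hj0, hj⟩
        exact ⟨Ne.symm hj0, (stmt4_point_eq_inf L hdim hinj h1 (Ne.symm hj0) hp0 hj).symm⟩
    have hcount0 : 5 = ∑ p ∈ S0, ((T p).card - 1) := by
      rw [← hJcard,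
        Finset.card_eq_sum_card_fiberwise (f := g) (t := S0)
          (fun j hj => Finset.mem_image_of_mem g hj)]
      refine Finset.sum_congr rfl fun p hp => ?_
      rw [hfiber0 p hp, Finset.card_erase_of_mem]
      rw [hT, Finset.mem_filter]
      refine ⟨Finset.mem_univ _, ?_⟩
      obtain ⟨j, hj, rfl⟩ := Finset.mem_image.1 hp
      exact inf_le_left
    have hsum2 : ∑ p ∈ S0, ((T p).card - 1) = S0.card * 2 :=
      Finset.sum_const_nat fun p hp => by rw [hall p (hS0sub hp)]
    rw [hsum2] at hcount0
    omega
  -- split the sum over double and triple points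
  set D : Finset (Submodule k (Fin 3 → k)) := S.filter (fun p => (T p).card = 2) with hD
  set E : Finset (Submodule k (Fin 3 → k)) := S.filter (fun p => ¬ (T p).card = 2) with hE
  have hsplit : (∑ p ∈ D, ((T p).card * (T p).card - (T p).card))
      + (∑ p ∈ E, ((T p).card * (T p).card - (T p).card))
      = ∑ p ∈ S, ((T p).card * (T p).card - (T p).card) :=
    Finset.sum_filter_add_sum_filter_not S _ _
  have hDsum : ∑ p ∈ D, ((T p).card * (T p).card - (T p).card) = D.card * 2 :=
    Finset.sum_const_nat fun p hp => by
      rw [hD, Finset.mem_filter] at hp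
      rw [hp.2]
  have hEsum : ∑ p ∈ E, ((T p).card * (T p).card - (T p).card) = E.card * 6 :=
    Finset.sum_const_nat fun p hp => by
      rw [hE, Finset.mem_filter] at hp
      have h2 := hSmem p hp.1
      have h3 : (T p).card = 3 := by omega
      rw [h3]
  rw [← hsplit, hDsum, hEsum] at hcount
  have hD1 : 1 ≤ D.card := by
    obtain ⟨p, hpS, hp2⟩ := hdouble
    have : p ∈ D := by rw [hD, Finset.mem_filter]; exact ⟨hpS, hp2⟩
    exact Finset.card_pos.2 ⟨p, this⟩
  have hD3 : 3 ≤ D.card := by omega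
  -- extract three distinct double points
  obtain ⟨p, hpD⟩ := Finset.card_pos.1 (by omega : 0 < D.card)
  have hq' : 0 < (D.erase p).card := by
    rw [Finset.card_erase_of_mem hpD]; omega
  obtain ⟨q, hqD⟩ := Finset.card_pos.1 hq'
  have hr' : 0 < ((D.erase p).erase q).card := by
    rw [Finset.card_erase_of_mem hqD, Finset.card_erase_of_mem hpD]; omega
  obtain ⟨r, hrD⟩ := Finset.card_pos.1 hr'
  have hqp : q ≠ p := (Finset.mem_erase.1 hqD).1
  have hrq : r ≠ q := (Finset.mem_erase.1 hrD).1
  have hrp : r ≠ p := (Finset.mem_erase.1 ((Finset.mem_erase.1 hrD).2)).1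
  have hqD' : q ∈ D := (Finset.mem_erase.1 hqD).2
  have hrD' : r ∈ D := (Finset.mem_erase.1 ((Finset.mem_erase.1 hrD).2)).2
  have hpfacts := Finset.mem_filter.1 hpD
  have hqfacts := Finset.mem_filter.1 hqD'
  have hrfacts := Finset.mem_filter.1 hrD'
  exact ⟨p, q, r, Ne.symm hqp, Ne.symm hrp, Ne.symm hrq,
    hSrank p hpfacts.1, hSrank q hqfacts.1, hSrank r hrfacts.1,
    hpfacts.2, hqfacts.2, hrfacts.2⟩
end
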